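/- Let N be a finite set and let v_or : Finset N → ℝ be arbitrary. For each S ⊆ N define the OR interaction I_or(S) = -∑_{L ⊆ S} (-1)^{|S|-|L|} v_or(N \ L). Then for every subset T ⊆ N one has ∑_{S ⊆ N, S ∩ T ≠ ∅} I_or(S) = v_or(T) - v_or(∅). -/

import Mathlib

open Finset

lemma sum_pow_real {α : Type*} [DecidableEq α] (x : Finset α) :
    (∑ m ∈ x.powerset, (-1 : ℝ) ^ m.card) = if x = ∅ then 1 else 0 := by
  have h := Finset.sum_powerset_neg_one_pow_card (x := x)
  have := congrArg (Int.cast : ℤ → ℝ) h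
  push_cast at this
  simpa using this

lemma key_or {N : Type*} [Fintype N] [DecidableEq N] (v : Finset N → ℝ) (A : Finset N) :
    ∑ S ∈ A.powerset, ∑ L ∈ S.powerset, (-1 : ℝ) ^ (S.card - L.card) * v Lᶜ = v Aᶜ := by
  rw [Finset.sum_comm' (s' := fun L => A.powerset.filter (fun S => L ⊆ S)) (t' := A.powerset)
    (by
      intro S L
      simp only [mem_powerset, mem_filter]
      constructor
      · rintro ⟨h1, h2⟩; exact ⟨⟨h1, h2⟩, h2.trans h1⟩
      · rintro ⟨⟨h1, h2⟩, _⟩; exact ⟨h1, h2⟩)]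
  have hinner : ∀ L ∈ A.powerset,
      ∑ S ∈ A.powerset.filter (fun S => L ⊆ S), (-1 : ℝ) ^ (S.card - L.card) * v Lᶜ
        = (∑ M ∈ (A \ L).powerset, (-1 : ℝ) ^ M.card) * v Lᶜ := by
    intro L hL
    rw [mem_powerset] at hL
    rw [Finset.sum_mul]
    refine Finset.sum_nbij' (fun S => S \ L) (fun M => L ∪ M) ?_ ?_ ?_ ?_ ?_
    · intro S hS
      simp only [mem_filter, mem_powerset] at hS ⊢
      exact sdiff_subset_sdiff hS.1 (le_refl L)
    · intro M hM
      simp only [mem_powerset] at hM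
      simp only [mem_filter, mem_powerset]
      constructor
      · exact union_subset hL (subset_sdiff.mp hM).1
      · exact subset_union_left
    · intro S hS
      simp only [mem_filter] at hS
      exact union_sdiff_of_subset hS.2
    · intro M hM
      simp only [mem_powerset] at hM
      exact union_sdiff_cancel_left (subset_sdiff.mp hM).2.symm
    · intro S hS
      simp only [mem_filter] at hS
      rw [card_sdiff_of_subset hS.2]
  rw [Finset.sum_congr rfl hinner]
  have h2 : ∀ L ∈ A.powerset,
      (∑ M ∈ (A \ L).powerset, (-1 : ℝ) ^ M.card) * v Lᶜ = if L = A then v Aᶜ else 0 := by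
    intro L hL
    rw [mem_powerset] at hL
    rw [sum_pow_real]
    by_cases h : L = A
    · simp [h]
    · have : ¬ A \ L = ∅ := by
        rw [sdiff_eq_empty_iff_subset]
        exact fun hh => h (subset_antisymm hL hh)
      simp [this, h]
  rw [Finset.sum_congr rfl h2, Finset.sum_ite_eq' A.powerset A (fun L => v Aᶜ)]
  simp

/-- **Universal matching for OR interactions.**
For an arbitrary `v_or : Finset N → ℝ`, defining the OR interaction
`I_or(S) = -∑_{L ⊆ S} (-1)^{|S|-|L|} v_or(N \ L)`, one has for every `T ⊆ N`:
`∑_{S ⊆ N, S ∩ T ≠ ∅} I_or(S) = v_or(T) - v_or(∅)`. -/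
theorem sum_or_interactions_eq {N : Type*} [Fintype N] [DecidableEq N]
    (vor : Finset N → ℝ) (T : Finset N) :
    ∑ S ∈ (Finset.univ : Finset (Finset N)).filter (fun S => S ∩ T ≠ ∅),
        (-(∑ L ∈ S.powerset, (-1 : ℝ) ^ (S.card - L.card) * vor Lᶜ)) =
      vor T - vor ∅ := by
  have h1 := key_or vor (univ : Finset N)
  rw [Finset.powerset_univ, Finset.compl_univ] at h1
  have h2 := key_or vor (Tᶜ)
  rw [compl_compl] at h2
  have hfilter : (univ : Finset (Finset N)).filter (fun S => ¬ S ∩ T ≠ ∅) = Tᶜ.powerset := by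
    ext S
    simp only [mem_filter, mem_univ, true_and, not_not, mem_powerset]
    rw [← Finset.disjoint_iff_inter_eq_empty]
    constructor
    · intro h x hx
      rw [Finset.mem_compl]
      exact fun hxT => (Finset.disjoint_left.mp h) hx hxT
    · intro h
      rw [Finset.disjoint_left]
      intro x hx hxT
      exact (Finset.mem_compl.mp (h hx)) hxT
  have hsplit := Finset.sum_filter_add_sum_filter_not (univ : Finset (Finset N))
    (fun S => S ∩ T ≠ ∅)
    (fun S => ∑ L ∈ S.powerset, (-1 : ℝ) ^ (S.card - L.card) * vor Lᶜ)
  rw [hfilter, h2, h1] at hsplit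
  rw [Finset.sum_neg_distrib]
  linarith
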